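/- If H is a bipartite graph and there exists a constant c > 0 depending only on H such that t_H(G) ≥ c · t_{K_2}(G)^{e(H)} holds for all graphs G, then t_H(G) ≥ t_{K_2}(G)^{e(H)} holds for all graphs G. -/

import Mathlib

/-- The homomorphism density `t_H(G) = h_H(G)/|V(G)|^{|V(H)|}`. -/
noncomputable def homDensity {α β : Type} [Fintype α] [Fintype β]
    (H : SimpleGraph α) (G : SimpleGraph β) : ℝ :=
  (Nat.card (H →g G) : ℝ) / (Fintype.card β : ℝ) ^ (Fintype.card α)

/-- The edge density `t_{K_2}(G) = 2e(G)/n²`. -/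
noncomputable def edgeDensity' {β : Type} [Fintype β] (G : SimpleGraph β) : ℝ :=
  2 * (Nat.card G.edgeSet : ℝ) / (Fintype.card β : ℝ) ^ 2

/-- The `(k+1)`-fold tensor (categorical) power of a graph. -/
def tensorPow {β : Type} (G : SimpleGraph β) (k : ℕ) : SimpleGraph (Fin (k + 1) → β) where
  Adj f g := ∀ i, G.Adj (f i) (g i)
  symm := ⟨fun f g h i => (h i).symm⟩
  loopless := ⟨fun f h => G.loopless.irrefl _ (h 0)⟩

/-- Homs into a tensor power are tuples of homs. -/
def homTensorEquiv {α β : Type} (H : SimpleGraph α) (G : SimpleGraph β) (k : ℕ) :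
    (H →g tensorPow G k) ≃ (Fin (k + 1) → (H →g G)) where
  toFun f i := ⟨fun v => f v i, fun h => f.map_rel h i⟩
  invFun g := ⟨fun v i => g i v, fun h i => (g i).map_rel h⟩
  left_inv f := rfl
  right_inv g := rfl

open Classical in
theorem card_adjPairs {β : Type} [Fintype β] (G : SimpleGraph β) :
    Nat.card {p : β × β // G.Adj p.1 p.2} = 2 * Nat.card G.edgeSet := by
  have e : G.Dart ≃ {p : β × β // G.Adj p.1 p.2} :=
    { toFun := fun d => ⟨d.toProd, d.adj⟩
      invFun := fun p => ⟨p.1, p.2⟩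
      left_inv := fun d => rfl
      right_inv := fun p => rfl }
  rw [← Nat.card_congr e, Nat.card_eq_fintype_card, SimpleGraph.dart_card_eq_twice_card_edges,
    Nat.card_eq_fintype_card, SimpleGraph.edgeFinset_card]

/-- Adjacent pairs of a tensor power are tuples of adjacent pairs. -/
def adjPairsTensorEquiv {β : Type} (G : SimpleGraph β) (k : ℕ) :
    {p : (Fin (k+1) → β) × (Fin (k+1) → β) // (tensorPow G k).Adj p.1 p.2} ≃
      (Fin (k + 1) → {p : β × β // G.Adj p.1 p.2}) where
  toFun p i := ⟨(p.1.1 i, p.1.2 i), p.2 i⟩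
  invFun q := ⟨(fun i => (q i).1.1, fun i => (q i).1.2), fun i => (q i).2⟩
  left_inv p := rfl
  right_inv q := rfl

theorem homDensity_tensorPow {α β : Type} [Fintype α] [Fintype β]
    (H : SimpleGraph α) (G : SimpleGraph β) (k : ℕ) :
    homDensity H (tensorPow G k) = homDensity H G ^ (k + 1) := by
  unfold homDensity
  rw [Nat.card_congr (homTensorEquiv H G k), Nat.card_fun, Nat.card_eq_fintype_card (α := Fin (k+1)),
    Fintype.card_fin, Fintype.card_fun, Fintype.card_fin, div_pow]
  push_cast
  ring

theorem edgeDensity'_tensorPow {β : Type} [Fintype β] (G : SimpleGraph β) (k : ℕ) :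
    edgeDensity' (tensorPow G k) = edgeDensity' G ^ (k + 1) := by
  unfold edgeDensity'
  have hnat : 2 * Nat.card (tensorPow G k).edgeSet = (2 * Nat.card G.edgeSet) ^ (k + 1) := by
    rw [← card_adjPairs (tensorPow G k), ← card_adjPairs G,
      Nat.card_congr (adjPairsTensorEquiv G k), Nat.card_fun,
      Nat.card_eq_fintype_card (α := Fin (k+1)), Fintype.card_fin]
  have h1 : 2 * (Nat.card (tensorPow G k).edgeSet : ℝ) =
      (2 * (Nat.card G.edgeSet : ℝ)) ^ (k + 1) := by exact_mod_cast congrArg Nat.cast hnat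
  rw [Fintype.card_fun, Fintype.card_fin, div_pow, h1]
  push_cast
  ring

theorem homDensity_nonneg {α β : Type} [Fintype α] [Fintype β]
    (H : SimpleGraph α) (G : SimpleGraph β) : 0 ≤ homDensity H G := by
  unfold homDensity
  positivity

theorem edgeDensity'_nonneg {β : Type} [Fintype β] (G : SimpleGraph β) :
    0 ≤ edgeDensity' G := by
  unfold edgeDensity'
  positivity

/-- **Lemma 1.2 (tensor power trick).** If a bipartite graph `H` satisfies Sidorenko's
inequality up to a constant factor `c > 0` for all graphs `G`, then it satisfies it
exactly for all graphs `G`. -/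
theorem sidorenko_of_sidorenko_with_constant {α : Type} [Fintype α]
    (H : SimpleGraph α) (hbip : H.Colorable 2)
    (hc : ∃ c : ℝ, 0 < c ∧ ∀ (β : Type) [Fintype β] [Nonempty β] (G : SimpleGraph β),
      c * edgeDensity' G ^ (Nat.card H.edgeSet) ≤ homDensity H G) :
    ∀ (β : Type) [Fintype β] [Nonempty β] (G : SimpleGraph β),
      edgeDensity' G ^ (Nat.card H.edgeSet) ≤ homDensity H G := by
  obtain ⟨c, hc0, hc⟩ := hc
  intro β _ _ G
  set e := Nat.card H.edgeSet with he
  set t2 := edgeDensity' G ^ e with ht2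
  set tH := homDensity H G with htH
  have ht2nn : 0 ≤ t2 := pow_nonneg (edgeDensity'_nonneg G) e
  have htHnn : 0 ≤ tH := homDensity_nonneg H G
  have key : ∀ k : ℕ, c * t2 ^ (k + 1) ≤ tH ^ (k + 1) := by
    intro k
    have := hc (Fin (k+1) → β) (tensorPow G k)
    rw [homDensity_tensorPow, edgeDensity'_tensorPow, ← pow_mul, mul_comm (k+1) e, pow_mul] at this
    exact this
  by_contra hlt
  push_neg at hlt
  have ht2pos : 0 < t2 := lt_of_le_of_lt htHnn hlt
  have hr : tH / t2 < 1 := (div_lt_one ht2pos).mpr hlt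
  have hrnn : 0 ≤ tH / t2 := div_nonneg htHnn ht2nn
  obtain ⟨n, hn⟩ := exists_pow_lt_of_lt_one hc0 hr
  have h1 : (tH / t2) ^ (n + 1) ≤ (tH / t2) ^ n :=
    pow_le_pow_of_le_one hrnn hr.le (Nat.le_succ n)
  have h2 : c ≤ (tH / t2) ^ (n + 1) := by
    have := key n
    rw [div_pow]
    rw [le_div_iff₀ (pow_pos ht2pos (n+1))]
    linarith
  linarith [lt_of_le_of_lt (h2.trans h1) hn]
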